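/- Suppose the value group |k^×| is dense in (0,∞). For any Banach function algebra A over k, the gauge norm ‖·‖_{A,A°} associated to the subring A° of power-bounded elements is the unique power-multiplicative norm on A equivalent to ‖·‖_A, and it equals the spectral radius function ρ_A. -/

import Mathlib

open Pointwise

/-!
STATEMENT 12: Suppose `|k^×|` is dense in `(0,∞)` (`DenselyNormedField k`).  For any Banach
function algebra `A` over `k` (spectral radius equivalent to the norm, expressed by
`‖a‖ ≤ C·ρ(a)`), the gauge norm `‖·‖_{A,A°}` of the subring `A°` of power-bounded elements
is a power-multiplicative norm equivalent to `‖·‖_A`, is the unique such norm, and equals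
the spectral radius function `ρ_A`.
-/

def kball (k : Type*) [NormedField k] (r : ℝ) : Set k := {c | ‖c‖ ≤ r}

noncomputable def specRad {A : Type*} [NormedRing A] (a : A) : ℝ :=
  ⨅ n : ℕ+, ‖a ^ (n : ℕ)‖ ^ (((n : ℕ) : ℝ))⁻¹

def PowBdd {A : Type*} [NormedRing A] (a : A) : Prop := ∃ C : ℝ, ∀ n : ℕ, ‖a ^ n‖ ≤ C

noncomputable def gaugeNorm (k : Type*) {A : Type*} [NormedField k] [AddCommGroup A]
    [Module k A] (W : Set A) (a : A) : ℝ :=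
  sInf {r : ℝ | 0 < r ∧ a ∈ kball k r • W}

/-- `N` is a power-multiplicative norm on the `k`-algebra `A` equivalent to the given
norm of `A`. -/
def IsEquivPowMulNorm (k : Type*) {A : Type*} [NormedField k] [NormedCommRing A]
    [NormedAlgebra k A] (N : A → ℝ) : Prop :=
  (∀ a : A, N a = 0 ↔ a = 0) ∧
  (∀ a b : A, N (a - b) ≤ max (N a) (N b)) ∧
  (∀ (c : k) (a : A), N (c • a) = ‖c‖ * N a) ∧
  (∀ a b : A, N (a * b) ≤ N a * N b) ∧
  (∀ a : A, N (a * a) = N a * N a) ∧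
  (∃ C > 0, ∀ a : A, N a ≤ C * ‖a‖ ∧ ‖a‖ ≤ C * N a)

/-- key growth lemma -/
lemma pow_growth {t M K : ℝ} (ht : 0 ≤ t) (hM : 0 ≤ M)
    (h : ∀ n : ℕ, ∃ m : ℕ, n ≤ m ∧ 1 ≤ m ∧ t ^ m ≤ K * M ^ m) : t ≤ M := by
  by_contra hlt
  push_neg at hlt
  rcases hM.eq_or_lt with hM0 | hM0
  · obtain ⟨m, -, hm1, hle⟩ := h 1
    rw [← hM0, zero_pow (by omega), mul_zero] at hle
    have : t ^ m = 0 := le_antisymm hle (pow_nonneg ht m)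
    have := pow_eq_zero_iff (n := m) (by omega) |>.mp this
    rw [← hM0] at hlt; linarith
  · have hq : 1 < t / M := (one_lt_div hM0).2 hlt
    obtain ⟨j, hj⟩ := pow_unbounded_of_one_lt K hq
    obtain ⟨m, hjm, hm1, hle⟩ := h j
    have h1 : (t / M) ^ m ≤ K := by
      rw [div_pow, div_le_iff₀ (pow_pos hM0 m)]
      exact hle
    have h2 : (t / M) ^ j ≤ (t / M) ^ m := pow_le_pow_right₀ hq.le hjm
    linarith

section specRadLemmas

variable {A : Type*} [NormedRing A] (a : A)

lemma specRad_bddBelow : BddBelow (Set.range fun n : ℕ+ => ‖a ^ (n : ℕ)‖ ^ (((n : ℕ) : ℝ))⁻¹) :=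
  ⟨0, Set.forall_mem_range.2 fun _ => Real.rpow_nonneg (norm_nonneg _) _⟩

lemma specRad_nonneg : 0 ≤ specRad a :=
  le_ciInf fun _ => Real.rpow_nonneg (norm_nonneg _) _

lemma specRad_le (n : ℕ+) : specRad a ≤ ‖a ^ (n : ℕ)‖ ^ (((n : ℕ) : ℝ))⁻¹ :=
  ciInf_le (specRad_bddBelow a) n

lemma specRad_pow_le (n : ℕ+) : specRad a ^ (n : ℕ) ≤ ‖a ^ (n : ℕ)‖ := by
  have h := pow_le_pow_left₀ (specRad_nonneg a) (specRad_le a n) (n : ℕ)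
  rwa [Real.rpow_inv_natCast_pow (norm_nonneg _) n.ne_zero] at h

lemma specRad_le_norm : specRad a ≤ ‖a‖ := by
  have h := specRad_le a 1
  simpa using h

lemma specRad_le_of_pow_le {M K : ℝ} (hM : 0 ≤ M)
    (h : ∀ n : ℕ, 1 ≤ n → ‖a ^ n‖ ≤ K * M ^ n) : specRad a ≤ M := by
  refine pow_growth (K := K) (specRad_nonneg a) hM fun n => ⟨max n 1, le_max_left _ _, le_max_right _ _, ?_⟩
  calc specRad a ^ max n 1 ≤ ‖a ^ max n 1‖ :=
        specRad_pow_le a ⟨max n 1, by omega⟩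
    _ ≤ K * M ^ max n 1 := h _ (le_max_right _ _)

lemma specRad_zero : specRad (0 : A) = 0 := by
  refine le_antisymm ?_ (specRad_nonneg 0)
  have h := specRad_le (0 : A) 1
  simpa using h

lemma specRad_pow (m : ℕ) (hm : 1 ≤ m) : specRad (a ^ m) = specRad a ^ m := by
  have hmR : ((m : ℕ) : ℝ) ≠ 0 := Nat.cast_ne_zero.2 (by omega)
  refine le_antisymm ?_ ?_
  · -- specRad (a^m) ≤ specRad a ^ m
    have key : ∀ j : ℕ+, specRad (a ^ m) ≤ (‖a ^ (j : ℕ)‖ ^ (((j : ℕ) : ℝ))⁻¹) ^ m := by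
      intro j
      have h1 : specRad (a ^ m) ≤ ‖(a ^ m) ^ (j : ℕ)‖ ^ (((j : ℕ) : ℝ))⁻¹ := specRad_le _ j
      have h2 : ‖(a ^ m) ^ (j : ℕ)‖ ≤ ‖a ^ (j : ℕ)‖ ^ m := by
        rw [← pow_mul, mul_comm, pow_mul]
        exact norm_pow_le' _ (by omega)
      calc specRad (a ^ m) ≤ ‖(a ^ m) ^ (j : ℕ)‖ ^ (((j : ℕ) : ℝ))⁻¹ := h1
        _ ≤ (‖a ^ (j : ℕ)‖ ^ m) ^ (((j : ℕ) : ℝ))⁻¹ :=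
            Real.rpow_le_rpow (norm_nonneg _) h2 (by positivity)
        _ = (‖a ^ (j : ℕ)‖ ^ (((j : ℕ) : ℝ))⁻¹) ^ m := by
            rw [← Real.rpow_natCast (‖a ^ (j:ℕ)‖ ^ (((j:ℕ):ℝ))⁻¹) m, ← Real.rpow_natCast ‖a ^ (j:ℕ)‖ m,
              ← Real.rpow_mul (norm_nonneg _), ← Real.rpow_mul (norm_nonneg _), mul_comm]
    have key2 : specRad (a ^ m) ^ (((m : ℕ) : ℝ))⁻¹ ≤ specRad a := by
      refine le_ciInf fun j => ?_
      have := Real.rpow_le_rpow (specRad_nonneg (a ^ m)) (key j) (by positivity : (0:ℝ) ≤ (((m:ℕ):ℝ))⁻¹)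
      rwa [Real.pow_rpow_inv_natCast (Real.rpow_nonneg (norm_nonneg _) _) (by omega)] at this
    have := pow_le_pow_left₀ (Real.rpow_nonneg (specRad_nonneg _) _) key2 m
    rwa [Real.rpow_inv_natCast_pow (specRad_nonneg _) (by omega)] at this
  · -- specRad a ^ m ≤ specRad (a^m)
    refine le_ciInf fun n => ?_
    have h1 : specRad a ≤ ‖a ^ (m * (n : ℕ))‖ ^ (((m * (n : ℕ) : ℕ) : ℝ))⁻¹ := by
      have := specRad_le a (⟨m, by omega⟩ * n)
      exact this
    have h2 := pow_le_pow_left₀ (specRad_nonneg a) h1 m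
    have h3 : (‖a ^ (m * (n : ℕ))‖ ^ (((m * (n : ℕ) : ℕ) : ℝ))⁻¹) ^ m
        = ‖(a ^ m) ^ (n : ℕ)‖ ^ (((n : ℕ) : ℝ))⁻¹ := by
      rw [← pow_mul, ← Real.rpow_natCast (‖a ^ (m * (n:ℕ))‖ ^ _) m, ← Real.rpow_mul (norm_nonneg _)]
      congr 1
      push_cast
      field_simp
    rw [h3] at h2
    exact le_trans h2 (le_refl _)

end specRadLemmas

section withC

variable {k : Type*} {A : Type*} [NormedField k] [NormedCommRing A] [NormOneClass A]
  [NormedAlgebra k A]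

lemma norm_pow_le_spec {C : ℝ} (hC1 : 1 ≤ C) (hC : ∀ a : A, ‖a‖ ≤ C * specRad a)
    (a : A) (n : ℕ) : ‖a ^ n‖ ≤ C * specRad a ^ n := by
  rcases Nat.eq_zero_or_pos n with rfl | hn
  · simpa using hC1
  · calc ‖a ^ n‖ ≤ C * specRad (a ^ n) := hC _
      _ = C * specRad a ^ n := by rw [specRad_pow a n hn]

lemma specRad_smul_le (c : k) (a : A) {C : ℝ} (hC1 : 1 ≤ C)
    (hC : ∀ a : A, ‖a‖ ≤ C * specRad a) : specRad (c • a) ≤ ‖c‖ * specRad a := by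
  refine specRad_le_of_pow_le (K := C) _ (mul_nonneg (norm_nonneg c) (specRad_nonneg a))
    fun n hn => ?_
  rw [smul_pow, norm_smul, norm_pow, mul_pow]
  calc ‖c‖ ^ n * ‖a ^ n‖ ≤ ‖c‖ ^ n * (C * specRad a ^ n) := by
        exact mul_le_mul_of_nonneg_left (norm_pow_le_spec hC1 hC a n) (by positivity)
    _ = C * (‖c‖ ^ n * specRad a ^ n) := by ring

lemma specRad_smul (c : k) (a : A) {C : ℝ} (hC1 : 1 ≤ C)
    (hC : ∀ a : A, ‖a‖ ≤ C * specRad a) : specRad (c • a) = ‖c‖ * specRad a := by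
  rcases eq_or_ne c 0 with rfl | hc
  · simp [specRad_zero]
  · refine le_antisymm (specRad_smul_le c a hC1 hC) ?_
    have h := specRad_smul_le c⁻¹ (c • a) hC1 hC
    rw [smul_smul, inv_mul_cancel₀ hc, one_smul, norm_inv] at h
    have hcpos : (0:ℝ) < ‖c‖ := norm_pos_iff.2 hc
    have h2 := mul_le_mul_of_nonneg_left h hcpos.le
    rwa [← mul_assoc, mul_inv_cancel₀ hcpos.ne', one_mul] at h2

lemma specRad_mul_le (a b : A) {C : ℝ} (hC1 : 1 ≤ C)
    (hC : ∀ a : A, ‖a‖ ≤ C * specRad a) : specRad (a * b) ≤ specRad a * specRad b := by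
  refine specRad_le_of_pow_le (K := C * C) _
    (mul_nonneg (specRad_nonneg a) (specRad_nonneg b)) fun n hn => ?_
  rw [mul_pow a b, mul_pow (specRad a)]
  calc ‖a ^ n * b ^ n‖ ≤ ‖a ^ n‖ * ‖b ^ n‖ := norm_mul_le _ _
    _ ≤ (C * specRad a ^ n) * (C * specRad b ^ n) := by
        exact mul_le_mul (norm_pow_le_spec hC1 hC a n) (norm_pow_le_spec hC1 hC b n)
          (norm_nonneg _) (mul_nonneg (by linarith) (pow_nonneg (specRad_nonneg a) n))
    _ = C * C * (specRad a ^ n * specRad b ^ n) := by ring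

lemma specRad_one : specRad (1 : A) = 1 := by
  refine le_antisymm (by simpa using specRad_le_norm (1 : A)) ?_
  refine le_ciInf fun n => ?_
  simp

lemma specRad_sub_le [IsUltrametricDist A] (a b : A) {C : ℝ} (hC1 : 1 ≤ C)
    (hC : ∀ a : A, ‖a‖ ≤ C * specRad a) :
    specRad (a - b) ≤ max (specRad a) (specRad b) := by
  set M := max (specRad a) (specRad b) with hM
  have hM0 : 0 ≤ M := le_trans (specRad_nonneg a) (le_max_left _ _)
  refine specRad_le_of_pow_le (K := C * C) _ hM0 fun n hn => ?_
  rw [sub_pow]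
  refine IsUltrametricDist.norm_sum_le_of_forall_le_of_nonneg (by positivity) fun i hi => ?_
  rw [Finset.mem_range] at hi
  have h1 : ‖((-1 : A)) ^ (i + n)‖ ≤ 1 := by
    rcases Nat.eq_zero_or_pos (i + n) with h | h
    · simp [h]
    · calc ‖((-1 : A)) ^ (i + n)‖ ≤ ‖(-1 : A)‖ ^ (i + n) := norm_pow_le' _ h
        _ = 1 := by simp
  have h2 : ‖(n.choose i : A)‖ ≤ 1 := IsUltrametricDist.norm_natCast_le_one A _
  calc ‖(-1:A) ^ (i + n) * a ^ i * b ^ (n - i) * (n.choose i : A)‖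
      ≤ ‖(-1:A) ^ (i + n) * a ^ i * b ^ (n - i)‖ * ‖(n.choose i : A)‖ := norm_mul_le _ _
    _ ≤ ‖(-1:A) ^ (i + n) * a ^ i * b ^ (n - i)‖ * 1 := by
        exact mul_le_mul_of_nonneg_left h2 (norm_nonneg _)
    _ = ‖(-1:A) ^ (i + n) * a ^ i * b ^ (n - i)‖ := mul_one _
    _ ≤ ‖(-1:A) ^ (i + n) * a ^ i‖ * ‖b ^ (n - i)‖ := norm_mul_le _ _
    _ ≤ (‖(-1:A) ^ (i + n)‖ * ‖a ^ i‖) * ‖b ^ (n - i)‖ := by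
        exact mul_le_mul_of_nonneg_right (norm_mul_le _ _) (norm_nonneg _)
    _ ≤ (1 * ‖a ^ i‖) * ‖b ^ (n - i)‖ := by
        refine mul_le_mul_of_nonneg_right (mul_le_mul_of_nonneg_right h1 (norm_nonneg _))
          (norm_nonneg _)
    _ = ‖a ^ i‖ * ‖b ^ (n - i)‖ := by rw [one_mul]
    _ ≤ (C * specRad a ^ i) * (C * specRad b ^ (n - i)) := by
        exact mul_le_mul (norm_pow_le_spec hC1 hC a i) (norm_pow_le_spec hC1 hC b (n - i))
          (norm_nonneg _) (mul_nonneg (by linarith) (pow_nonneg (specRad_nonneg a) i))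
    _ ≤ (C * M ^ i) * (C * M ^ (n - i)) := by
        refine mul_le_mul ?_ ?_
          (mul_nonneg (by linarith) (pow_nonneg (specRad_nonneg b) _))
          (mul_nonneg (by linarith) (pow_nonneg hM0 _))
        · exact mul_le_mul_of_nonneg_left
            (pow_le_pow_left₀ (specRad_nonneg a) (le_max_left _ _) i) (by linarith)
        · exact mul_le_mul_of_nonneg_left
            (pow_le_pow_left₀ (specRad_nonneg b) (le_max_right _ _) _) (by linarith)
    _ = C * C * M ^ n := by
        rw [show (C * M ^ i) * (C * M ^ (n - i)) = C * C * (M ^ i * M ^ (n - i)) by ring,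
          ← pow_add, Nat.add_sub_cancel' (by omega)]

end withC

section gauge

variable {k A : Type*} [DenselyNormedField k] [NormedCommRing A] [NormOneClass A]
  [NormedAlgebra k A]

lemma powBdd_one : PowBdd (1 : A) := ⟨1, fun n => by simp⟩

lemma gauge_eq_specRad {C : ℝ} (hC1 : 1 ≤ C) (hC : ∀ a : A, ‖a‖ ≤ C * specRad a) (a : A) :
    gaugeNorm k {x : A | PowBdd x} a = specRad a := by
  set S := {r : ℝ | 0 < r ∧ a ∈ kball k r • {x : A | PowBdd x}} with hSdef
  have hlb : ∀ r ∈ S, specRad a ≤ r := by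
    rintro r ⟨hr0, hmem⟩
    obtain ⟨c, hc, w, hw, rfl⟩ := Set.mem_smul.1 hmem
    obtain ⟨B, hB⟩ := hw
    have hB1 : (1:ℝ) ≤ B := by simpa using hB 0
    refine specRad_le_of_pow_le (K := B) _ hr0.le fun n hn => ?_
    rw [smul_pow, norm_smul, norm_pow]
    calc ‖c‖ ^ n * ‖w ^ n‖ ≤ r ^ n * B :=
          mul_le_mul (pow_le_pow_left₀ (norm_nonneg c) hc n) (hB n) (norm_nonneg _)
            (pow_nonneg hr0.le n)
      _ = B * r ^ n := mul_comm _ _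
  have hmem : ∀ r : ℝ, specRad a < r → r ∈ S := by
    intro r hr
    have hr0 : 0 < r := lt_of_le_of_lt (specRad_nonneg a) hr
    refine ⟨hr0, ?_⟩
    rcases eq_or_ne a 0 with rfl | ha
    · exact Set.mem_smul.2 ⟨0, by simpa [kball] using hr0.le, 1, powBdd_one, by simp⟩
    · have hρpos : 0 < specRad a := by
        have h1 : 0 < ‖a‖ := norm_pos_iff.2 ha
        have h2 := hC a
        nlinarith
      obtain ⟨c, hc1, hc2⟩ := NormedField.exists_lt_norm_lt k (specRad_nonneg a) hr
      have hcpos : (0:ℝ) < ‖c‖ := lt_of_le_of_lt (specRad_nonneg a) hc1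
      have hc0 : c ≠ 0 := norm_pos_iff.1 hcpos
      refine Set.mem_smul.2 ⟨c, hc2.le, c⁻¹ • a, ?_, smul_inv_smul₀ hc0 a⟩
      refine ⟨C, fun n => ?_⟩
      rw [smul_pow, norm_smul, norm_pow, norm_inv]
      have hle : specRad a * ‖c‖⁻¹ ≤ 1 := by
        rw [← div_eq_mul_inv]
        exact (div_le_one hcpos).2 hc1.le
      calc ‖c‖⁻¹ ^ n * ‖a ^ n‖ ≤ ‖c‖⁻¹ ^ n * (C * specRad a ^ n) :=
            mul_le_mul_of_nonneg_left (norm_pow_le_spec hC1 hC a n) (by positivity)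
        _ = C * (specRad a * ‖c‖⁻¹) ^ n := by rw [mul_pow]; ring
        _ ≤ C * 1 := mul_le_mul_of_nonneg_left
            (pow_le_one₀ (mul_nonneg (specRad_nonneg a) (by positivity)) hle) (by linarith)
        _ = C := mul_one C
  have hbdd : BddBelow S := ⟨0, fun x hx => hx.1.le⟩
  refine le_antisymm ?_ (le_csInf ⟨specRad a + 1, hmem _ (by linarith)⟩ hlb)
  by_contra hcon
  push_neg at hcon
  obtain ⟨r, hr1, hr2⟩ := exists_between hcon
  exact absurd (csInf_le hbdd (hmem r hr1)) (not_le.2 hr2)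

end gauge


theorem stmt12 {k A : Type*} [DenselyNormedField k] [CompleteSpace k]
    [IsUltrametricDist k] [NormedCommRing A] [NormOneClass A] [IsUltrametricDist A]
    [NormedAlgebra k A] [CompleteSpace A]
    (hBFA : ∃ C > 0, ∀ a : A, ‖a‖ ≤ C * specRad a) :
    IsEquivPowMulNorm k (gaugeNorm k {a : A | PowBdd a}) ∧
    (∀ N : A → ℝ, IsEquivPowMulNorm k N → N = gaugeNorm k {a : A | PowBdd a}) ∧
    (∀ a : A, gaugeNorm k {a : A | PowBdd a} a = specRad a) := by
  obtain ⟨C0, hC0pos, hC0⟩ := hBFA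
  set C : ℝ := max C0 1 with hCdef
  have hC1 : (1:ℝ) ≤ C := le_max_right _ _
  have hC : ∀ a : A, ‖a‖ ≤ C * specRad a := fun a =>
    (hC0 a).trans (mul_le_mul_of_nonneg_right (le_max_left _ _) (specRad_nonneg a))
  have heq : ∀ a : A, gaugeNorm k {x : A | PowBdd x} a = specRad a := gauge_eq_specRad hC1 hC
  have hfun : gaugeNorm k {a : A | PowBdd a} = fun a : A => specRad a := funext heq
  rw [hfun]
  refine ⟨?_, ?_, fun a => rfl⟩
  · refine ⟨fun a => ⟨fun h => ?_, fun h => by rw [h]; exact specRad_zero⟩,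
      fun a b => specRad_sub_le a b hC1 hC,
      fun c a => specRad_smul c a hC1 hC,
      fun a b => specRad_mul_le a b hC1 hC,
      fun a => by show specRad (a * a) = specRad a * specRad a; rw [← pow_two, specRad_pow a 2 (by norm_num), pow_two],
      ⟨C, lt_of_lt_of_le zero_lt_one hC1, fun a =>
        ⟨(specRad_le_norm a).trans (le_mul_of_one_le_left (norm_nonneg a) hC1), hC a⟩⟩⟩
    · have h' : specRad a = 0 := h
      have := hC a
      rw [h', mul_zero] at this
      exact norm_le_zero_iff.1 this
  · intro N hN
    obtain ⟨h0, hu, hs, hm, hp, D, hD, hDa⟩ := hN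
    funext a
    have hpow2 : ∀ m : ℕ, N (a ^ 2 ^ m) = N a ^ 2 ^ m := by
      intro m
      induction m with
      | zero => simp
      | succ m ih =>
        have : a ^ 2 ^ (m + 1) = a ^ 2 ^ m * a ^ 2 ^ m := by
          rw [← pow_add]
          congr 1
          omega
        rw [this, hp, ih, ← pow_add]
        congr 1
        omega
    have hNnonneg : 0 ≤ N a := by
      have h1 := (hDa a).2
      have h2 := norm_nonneg a
      nlinarith
    have le1 : N a ≤ specRad a := by
      refine pow_growth (K := D * C) hNnonneg (specRad_nonneg a) fun n =>
        ⟨2 ^ n, n.lt_two_pow_self.le, Nat.one_le_two_pow, ?_⟩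
      calc N a ^ 2 ^ n = N (a ^ 2 ^ n) := (hpow2 n).symm
        _ ≤ D * ‖a ^ 2 ^ n‖ := by
            have := (hDa (a ^ 2 ^ n)).1
            linarith
        _ ≤ D * (C * specRad a ^ 2 ^ n) :=
            mul_le_mul_of_nonneg_left (norm_pow_le_spec hC1 hC a _) hD.le
        _ = D * C * specRad a ^ 2 ^ n := by ring
    have ge1 : specRad a ≤ N a := by
      refine pow_growth (K := D) (specRad_nonneg a) hNnonneg fun n =>
        ⟨2 ^ n, n.lt_two_pow_self.le, Nat.one_le_two_pow, ?_⟩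
      calc specRad a ^ 2 ^ n ≤ ‖a ^ 2 ^ n‖ := by
            have := specRad_pow_le a ⟨2 ^ n, by positivity⟩
            simpa using this
        _ ≤ D * N (a ^ 2 ^ n) := (hDa _).2
        _ = D * N a ^ 2 ^ n := by rw [hpow2]
    exact le_antisymm le1 ge1
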